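/- Suppose (h₁, V₁) on H₁ and (h₂, V₂) on H₂ realize the same finite-dimensional concept family C ⊆ ℝ^X (i.e., {ℓ∘h₁ : ℓ ∈ V₁} = {ℓ∘h₂ : ℓ ∈ V₂} = C) with both evaluation maps injective. Then the probe-visible quotients H₁/K(V₁) and H₂/K(V₂) are both canonically linearly isomorphic to C*, and hence to each other. -/

import Mathlib

/-- The evaluation map sending a probe `ℓ ∈ V` to the function `x ↦ ℓ (h x)`. -/
def evalMap {X : Type*} {H : Type*} [AddCommGroup H] [Module ℝ H]
    (h : X → H) (V : Submodule ℝ (Module.Dual ℝ H)) : V →ₗ[ℝ] (X → ℝ) where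
  toFun ℓ := fun x => (ℓ : Module.Dual ℝ H) (h x)
  map_add' a b := by funext x; simp
  map_smul' c a := by funext x; simp

/-- The quotient by the common kernel is isomorphic to the dual of the probe space. -/
lemma quot_equiv_dual {H : Type*} [AddCommGroup H] [Module ℝ H] [FiniteDimensional ℝ H]
    (V : Submodule ℝ (Module.Dual ℝ H)) :
    Nonempty ((H ⧸ (⨅ ℓ : V, LinearMap.ker (ℓ : Module.Dual ℝ H))) ≃ₗ[ℝ]
      Module.Dual ℝ V) := by
  let Q : H →ₗ[ℝ] Module.Dual ℝ V :=
    V.subtype.dualMap ∘ₗ (Module.Dual.eval ℝ H)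
  have hsurj : Function.Surjective Q := by
    have h : ⇑Q = ⇑V.subtype.dualMap ∘ ⇑(Module.Dual.eval ℝ H) := rfl
    rw [h]
    have hs1 : Function.Surjective V.subtype.dualMap :=
      Subspace.dualRestrict_surjective (W := V)
    have hs2 : Function.Surjective (Module.Dual.eval ℝ H) :=
      (Module.evalEquiv ℝ H).surjective
    exact hs1.comp hs2
  have hker : LinearMap.ker Q = ⨅ ℓ : V, LinearMap.ker (ℓ : Module.Dual ℝ H) := by
    ext v
    simp only [LinearMap.mem_ker, Submodule.mem_iInf]
    constructor
    · intro h ℓ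
      have := congrFun (congrArg DFunLike.coe h) ℓ
      simpa [Q] using this
    · intro h
      ext ℓ
      simpa [Q] using h ℓ
  exact ⟨(hker ▸ LinearMap.quotKerEquivOfSurjective Q hsurj)⟩

/-- Common abstract probe space: if two realizations induce the same
finite-dimensional concept family `C ⊆ ℝ^X` with injective evaluation maps,
then both probe-visible quotients `Hᵢ/K(Vᵢ)` are linearly isomorphic to the
dual `C*`, hence to each other. -/
theorem stmt17 {X : Type*} {H₁ H₂ : Type*}
    [AddCommGroup H₁] [Module ℝ H₁] [FiniteDimensional ℝ H₁]
    [AddCommGroup H₂] [Module ℝ H₂] [FiniteDimensional ℝ H₂]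
    (h₁ : X → H₁) (h₂ : X → H₂)
    (V₁ : Submodule ℝ (Module.Dual ℝ H₁)) (V₂ : Submodule ℝ (Module.Dual ℝ H₂))
    (hinj₁ : Function.Injective (evalMap h₁ V₁))
    (hinj₂ : Function.Injective (evalMap h₂ V₂))
    (hC : LinearMap.range (evalMap h₁ V₁) = LinearMap.range (evalMap h₂ V₂)) :
    Nonempty ((H₁ ⧸ (⨅ ℓ : V₁, LinearMap.ker (ℓ : Module.Dual ℝ H₁))) ≃ₗ[ℝ]
        Module.Dual ℝ (LinearMap.range (evalMap h₁ V₁))) ∧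
    Nonempty ((H₂ ⧸ (⨅ ℓ : V₂, LinearMap.ker (ℓ : Module.Dual ℝ H₂))) ≃ₗ[ℝ]
        Module.Dual ℝ (LinearMap.range (evalMap h₁ V₁))) ∧
    Nonempty ((H₁ ⧸ (⨅ ℓ : V₁, LinearMap.ker (ℓ : Module.Dual ℝ H₁))) ≃ₗ[ℝ]
        (H₂ ⧸ (⨅ ℓ : V₂, LinearMap.ker (ℓ : Module.Dual ℝ H₂)))) := by
  obtain ⟨e₁⟩ := quot_equiv_dual V₁
  obtain ⟨e₂⟩ := quot_equiv_dual V₂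
  let f₁ : Module.Dual ℝ V₁ ≃ₗ[ℝ] Module.Dual ℝ (LinearMap.range (evalMap h₁ V₁)) :=
    (LinearEquiv.ofInjective (evalMap h₁ V₁) hinj₁).dualMap.symm
  let f₂ : Module.Dual ℝ V₂ ≃ₗ[ℝ] Module.Dual ℝ (LinearMap.range (evalMap h₂ V₂)) :=
    (LinearEquiv.ofInjective (evalMap h₂ V₂) hinj₂).dualMap.symm
  have g₁ := e₁.trans f₁
  have g₂ := (e₂.trans f₂).trans (LinearEquiv.ofEq _ _ hC.symm).dualMap.symm
  exact ⟨⟨g₁⟩, ⟨g₂⟩, ⟨g₁.trans g₂.symm⟩⟩
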